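/- Let f_0 be a probability density on ℝ^d of a random vector Z_0, let G_0 be the continuous CDF of a real random variable symmetric about 0 (so G_0(-t) = 1 - G_0(t) for all t), and let w : ℝ^d → ℝ be measurable such that W = w(Z_0) is symmetric about 0 in distribution. Then f(x) = 2 f_0(x) G_0(w(x)) is a probability density on ℝ^d, i.e. ∫ 2 f_0(x) G_0(w(x)) dx = 1. -/

import Mathlib

open MeasureTheory
open scoped ENNReal NNReal

theorem stmt0 {Ω : Type*} [MeasurableSpace Ω] (P : Measure Ω) [IsProbabilityMeasure P]
    {d : ℕ} (Z0 : Ω → (Fin d → ℝ)) (hZ0 : Measurable Z0)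
    (f0 : (Fin d → ℝ) → ℝ) (hf0m : Measurable f0) (hf0nn : ∀ x, 0 ≤ f0 x)
    (hdens : Measure.map Z0 P = volume.withDensity (fun x => ENNReal.ofReal (f0 x)))
    (G0 : ℝ → ℝ) (hG0c : Continuous G0) (hG0mono : Monotone G0)
    (hG0bot : Filter.Tendsto G0 Filter.atBot (nhds 0))
    (hG0top : Filter.Tendsto G0 Filter.atTop (nhds 1))
    (hG0sym : ∀ t, G0 (-t) = 1 - G0 t)
    (w : (Fin d → ℝ) → ℝ) (hw : Measurable w)
    (hWsym : Measure.map (fun ω => w (Z0 ω)) P = Measure.map (fun ω => -w (Z0 ω)) P) :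
    ∫ x, 2 * f0 x * G0 (w x) = 1 := by
  have hG0le1 : ∀ t, G0 t ≤ 1 := fun t => hG0mono.ge_of_tendsto hG0top t
  have hG0nn : ∀ t, 0 ≤ G0 t := fun t => hG0mono.le_of_tendsto hG0bot t
  have hGwm : Measurable (fun x => G0 (w x)) := hG0c.measurable.comp hw
  -- integrability of G0 ∘ w ∘ Z0 w.r.t. P
  have hint : Integrable (fun ω => G0 (w (Z0 ω))) P := by
    apply Integrable.mono' (integrable_const (1 : ℝ))
      ((hGwm.comp hZ0).aestronglyMeasurable)
    filter_upwards with ω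
    simp only [Function.comp_apply]
    rw [Real.norm_eq_abs, abs_of_nonneg (hG0nn _)]
    exact hG0le1 _
  set I := ∫ ω, G0 (w (Z0 ω)) ∂P with hI
  -- Step B : I = 1 - I
  have hB : I = 1 - I := by
    have hm1 : Measurable fun ω => w (Z0 ω) := hw.comp hZ0
    have h1 : I = ∫ t, G0 t ∂(Measure.map (fun ω => w (Z0 ω)) P) :=
      (integral_map hm1.aemeasurable hG0c.measurable.aestronglyMeasurable).symm
    have h2 : ∫ t, G0 t ∂(Measure.map (fun ω => -w (Z0 ω)) P)
        = ∫ ω, G0 (-(w (Z0 ω))) ∂P :=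
      integral_map hm1.neg.aemeasurable hG0c.measurable.aestronglyMeasurable
    have h3 : ∫ ω, G0 (-(w (Z0 ω))) ∂P = ∫ ω, (1 - G0 (w (Z0 ω))) ∂P := by
      simp only [hG0sym]
    have h4 : ∫ ω, (1 - G0 (w (Z0 ω))) ∂P = 1 - I := by
      rw [integral_sub (integrable_const 1) hint]
      simp
      exact hI.symm
    conv_lhs => rw [h1, hWsym, h2, h3, h4]
  -- Step A : the integral equals 2 * I
  have hA : ∫ x, 2 * f0 x * G0 (w x) = 2 * I := by
    have hden : (fun x : Fin d → ℝ => ENNReal.ofReal (f0 x))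
        = fun x => ((Real.toNNReal (f0 x) : ℝ≥0) : ℝ≥0∞) := rfl
    have key : ∫ x, G0 (w x) ∂(Measure.map Z0 P)
        = ∫ x, f0 x * G0 (w x) := by
      rw [hdens, hden,
        integral_withDensity_eq_integral_smul (hf0m.real_toNNReal) (fun x => G0 (w x))]
      congr 1
      ext x
      simp [NNReal.smul_def, Real.coe_toNNReal _ (hf0nn x)]
    have key2 : ∫ x, G0 (w x) ∂(Measure.map Z0 P) = I := by
      rw [integral_map hZ0.aemeasurable hGwm.aestronglyMeasurable]
    have : ∫ x, 2 * f0 x * G0 (w x) = 2 * ∫ x, f0 x * G0 (w x) := by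
      rw [← integral_const_mul]
      congr 1; ext x; ring
    rw [this, ← key, key2]
  rw [hA]
  linarith
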